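/- Forward completeness of a quasi-metric space (M,d) together with the property that for every x and r > 0 the closed forward ball B̄ₓ(r) is compact implies: for every pair x, y with d(x,y) < ∞ and every minimizing sequence of 1-Lipschitz curves from x to y with lengths converging to d(x,y), there exists a 1-Lipschitz curve from x to y of length exactly d(x,y). -/

import Mathlib

open Filter Topology


/-- The length of a curve γ : [0,T] → M in a quasi-metric space: the supremum over
partitions 0 = u₀ ≤ u₁ ≤ ⋯ ≤ uₙ = T of Σ d(γ(uᵢ), γ(uᵢ₊₁)). -/
noncomputable def curveLen {M : Type*} (d : M → M → ℝ) (T : ℝ) (γ : ℝ → M) : ℝ :=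
  sSup {s : ℝ | ∃ (n : ℕ) (u : Fin (n + 1) → ℝ), Monotone u ∧ u 0 = 0 ∧
    u (Fin.last n) = T ∧ s = ∑ i : Fin n, d (γ (u i.castSucc)) (γ (u i.succ))}

lemma pair_mem {M : Type*} (d : M → M → ℝ) (T : ℝ) (hT : 0 ≤ T) (c : ℝ → M) :
    d (c 0) (c T) ∈ {s : ℝ | ∃ (n : ℕ) (u : Fin (n + 1) → ℝ), Monotone u ∧ u 0 = 0 ∧
      u (Fin.last n) = T ∧ s = ∑ i : Fin n, d (c (u i.castSucc)) (c (u i.succ))} := by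
  refine ⟨1, ![0, T], ?_, ?_, ?_, ?_⟩
  · intro i j hij
    fin_cases i <;> fin_cases j <;> simp_all
  · rfl
  · rfl
  · simp

lemma tele_sum {n : ℕ} (u : Fin (n+1) → ℝ) :
    ∑ i : Fin n, (u i.succ - u i.castSucc) = u (Fin.last n) - u 0 := by
  set w : ℕ → ℝ := fun j => u ⟨min j n, Nat.lt_succ_of_le (min_le_right j n)⟩ with hw
  have h1 : ∑ i : Fin n, (u i.succ - u i.castSucc) = ∑ i ∈ Finset.range n, (w (i+1) - w i) := by
    rw [← Fin.sum_univ_eq_sum_range]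
    apply Finset.sum_congr rfl
    intro i _
    have hi := i.isLt
    congr 1
    · congr 1; apply Fin.ext; simp [hw, Fin.val_succ]
    · congr 1; apply Fin.ext; simp [hw]
  rw [h1, Finset.sum_range_sub]
  have e1 : w n = u (Fin.last n) := by simp [hw]; congr 1
  have e2 : w 0 = u 0 := by simp [hw]
  rw [e1, e2]

/-- Any partition sum of a forward 1-Lipschitz curve on [0,T] is at most T. -/
lemma partition_sum_le {M : Type*} (d : M → M → ℝ) (T : ℝ) (c : ℝ → M)
    (hc : ∀ s t : ℝ, 0 ≤ s → s ≤ t → t ≤ T → d (c s) (c t) ≤ t - s) :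
    ∀ r ∈ {s : ℝ | ∃ (n : ℕ) (u : Fin (n + 1) → ℝ), Monotone u ∧ u 0 = 0 ∧
      u (Fin.last n) = T ∧ s = ∑ i : Fin n, d (c (u i.castSucc)) (c (u i.succ))}, r ≤ T := by
  rintro r ⟨n, u, hu, h0, hl, rfl⟩
  calc ∑ i : Fin n, d (c (u i.castSucc)) (c (u i.succ))
      ≤ ∑ i : Fin n, (u i.succ - u i.castSucc) := by
        apply Finset.sum_le_sum
        intro i _
        exact hc _ _ (h0 ▸ hu (Fin.zero_le _)) (hu (Fin.castSucc_lt_succ : i.castSucc < i.succ).le)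
          (hl ▸ hu (Fin.le_last _))
    _ = T := by rw [tele_sum, h0, hl, sub_zero]

/-- In a forward complete quasi-metric space with compact closed forward balls,
given x, y and a minimizing sequence of forward 1-Lipschitz curves from x to y
whose lengths converge to d(x,y), there exists a forward 1-Lipschitz curve from
x to y of length exactly d(x,y). -/
theorem stmt_15 {M : Type*} [τ : TopologicalSpace M] (d : M → M → ℝ)
    (hτ : τ = TopologicalSpace.generateFrom
      {s : Set M | ∃ (x : M) (r : ℝ), s = {y | d x y < r}})
    (hnonneg : ∀ x y, 0 ≤ d x y)
    (hsep : ∀ x y, d x y = 0 ↔ x = y)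
    (htri : ∀ x y z, d x z ≤ d x y + d y z)
    (hdcont : Continuous fun q : M × M => d q.1 q.2)
    (hcomplete : ∀ x : ℕ → M,
      (∀ ε > (0 : ℝ), ∃ N : ℕ, ∀ i j : ℕ, N ≤ i → i ≤ j → d (x i) (x j) < ε) →
      ∃ y, Filter.Tendsto (fun i => d (x i) y) Filter.atTop (nhds 0))
    (hcompact : ∀ (x : M) (r : ℝ), IsCompact {y | d x y ≤ r})
    (x y : M) (γseq : ℕ → ℝ → M)
    (hlip : ∀ k, ∀ s t : ℝ, 0 ≤ s → s ≤ t → t ≤ d x y + 1 →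
      d (γseq k s) (γseq k t) ≤ t - s)
    (hends : ∀ k, γseq k 0 = x ∧ γseq k (d x y + 1) = y)
    (hmin : Filter.Tendsto (fun k => curveLen d (d x y + 1) (γseq k))
      Filter.atTop (nhds (d x y))) :
    ∃ γ : ℝ → M,
      (∀ s t : ℝ, 0 ≤ s → s ≤ t → t ≤ d x y + 1 → d (γ s) (γ t) ≤ t - s) ∧
      γ 0 = x ∧ γ (d x y + 1) = y ∧ curveLen d (d x y + 1) γ = d x y := by
    classical
  set T := d x y + 1 with hT
  have hT0 : (0:ℝ) < T := by have := hnonneg x y; rw [hT]; linarith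
  -- an ultrafilter extending atTop
  let U : Ultrafilter ℕ := Ultrafilter.of atTop
  have hU : (U : Filter ℕ) ≤ atTop := Ultrafilter.of_le atTop
  -- curves stay in the forward ball of radius T
  have hmem : ∀ k (t : ℝ), 0 ≤ t → t ≤ T → d x (γseq k t) ≤ T := by
    intro k t h0 h1
    have h := hlip k 0 t le_rfl h0 h1
    rw [(hends k).1] at h
    linarith
  -- existence of limit points along U
  have hex : ∀ t : ℝ, 0 ≤ t → t ≤ T →
      ∃ z, (Ultrafilter.map (fun k => γseq k t) U : Filter M) ≤ 𝓝 z := by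
    intro t h0 h1
    obtain ⟨z, _, hz⟩ := (hcompact x T).ultrafilter_le_nhds
      (Ultrafilter.map (fun k => γseq k t) U)
      (by
        rw [le_principal_iff, Ultrafilter.coe_map, Filter.mem_map]
        exact Filter.univ_mem' (fun k => hmem k t h0 h1))
    exact ⟨z, hz⟩
  let g : ℝ → M := fun t =>
    if h : ∃ z, (Ultrafilter.map (fun k => γseq k t) U : Filter M) ≤ 𝓝 z then h.choose else x
  let γ : ℝ → M := fun t => if t = 0 then x else if t = T then y else g t
  have hγ0 : γ 0 = x := by simp [γ]
  have hγT : γ T = y := by simp [γ, hT0.ne']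
  have htend : ∀ t : ℝ, 0 ≤ t → t ≤ T →
      Tendsto (fun k => γseq k t) U (𝓝 (γ t)) := by
    intro t h0 h1
    by_cases ht0 : t = 0
    · subst ht0
      rw [hγ0]
      have : (fun k => γseq k 0) = fun _ => x := funext fun k => (hends k).1
      rw [this]; exact tendsto_const_nhds
    · by_cases htT : t = T
      · subst htT
        rw [hγT]
        have : (fun k => γseq k T) = fun _ => y := funext fun k => (hends k).2
        rw [this]; exact tendsto_const_nhds
      · have hg : γ t = g t := by simp [γ, ht0, htT]
        rw [hg]
        have h := hex t h0 h1
        have := h.choose_spec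
        simp only [g, dif_pos h]
        exact le_trans (le_of_eq (Ultrafilter.coe_map (fun k => γseq k t) U).symm) this
  have hdt : ∀ s t : ℝ, 0 ≤ s → s ≤ t → t ≤ T →
      Tendsto (fun k => d (γseq k s) (γseq k t)) U (𝓝 (d (γ s) (γ t))) := by
    intro s t h0 hst h1
    exact (hdcont.tendsto (γ s, γ t)).comp
      ((htend s h0 (hst.trans h1)).prodMk_nhds (htend t (h0.trans hst) h1))
  -- the limit curve is forward 1-Lipschitz
  have hγlip : ∀ s t : ℝ, 0 ≤ s → s ≤ t → t ≤ T → d (γ s) (γ t) ≤ t - s := by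
    intro s t h0 hst h1
    exact le_of_tendsto (hdt s t h0 hst h1)
      (Filter.Eventually.of_forall fun k => hlip k s t h0 hst h1)
  refine ⟨γ, hγlip, hγ0, hγT, ?_⟩
  -- the set of partition sums
  set S : (ℝ → M) → Set ℝ := fun c => {s : ℝ | ∃ (n : ℕ) (u : Fin (n + 1) → ℝ),
    Monotone u ∧ u 0 = 0 ∧ u (Fin.last n) = T ∧
    s = ∑ i : Fin n, d (c (u i.castSucc)) (c (u i.succ))} with hS
  have hSlen : ∀ c, curveLen d T c = sSup (S c) := fun c => rfl
  -- d x y is achieved by the trivial partition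
  have hmemS : d x y ∈ S γ := by
    have := pair_mem d T hT0.le γ
    rw [hγ0, hγT] at this
    exact this
  have hbddγ : BddAbove (S γ) := ⟨T, fun r hr => partition_sum_le d T γ hγlip r hr⟩
  have hle : sSup (S γ) ≤ d x y := by
    apply csSup_le ⟨d x y, hmemS⟩
    rintro r ⟨n, u, hu, h0, hl, rfl⟩
    have hFk : ∀ k, (∑ i : Fin n, d (γseq k (u i.castSucc)) (γseq k (u i.succ)))
        ≤ curveLen d T (γseq k) := by
      intro k
      rw [hSlen]
      apply le_csSup ⟨T, fun r hr => partition_sum_le d T (γseq k) (hlip k) r hr⟩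
      exact ⟨n, u, hu, h0, hl, rfl⟩
    have hFt : Tendsto (fun k => ∑ i : Fin n, d (γseq k (u i.castSucc)) (γseq k (u i.succ)))
        U (𝓝 (∑ i : Fin n, d (γ (u i.castSucc)) (γ (u i.succ)))) := by
      apply tendsto_finset_sum
      intro i _
      exact hdt (u i.castSucc) (u i.succ) (h0 ▸ hu (Fin.zero_le _))
        (hu (Fin.castSucc_lt_succ : i.castSucc < i.succ).le) (hl ▸ hu (Fin.le_last _))
    exact le_of_tendsto_of_tendsto' hFt (hmin.mono_left hU) hFk
  have hge : d x y ≤ sSup (S γ) := le_csSup hbddγ hmemS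
  rw [hSlen]
  linarith
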